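/- For every real μ, the function α ↦ ∫_{-∞}^{∞} (η(μ+z, α) - μ)^2 φ(z) dz is differentiable on (0, ∞), with derivative at α equal to -2[φ(α+μ) + φ(α-μ)] + 2α[Φ(-α-μ) + Φ(-α+μ)]. -/

import Mathlib

open MeasureTheory Filter

/-- Standard normal probability density function. -/
noncomputable def stdNormalPDF (x : ℝ) : ℝ :=
  (Real.sqrt (2 * Real.pi))⁻¹ * Real.exp (-(x ^ 2) / 2)

/-- Standard normal cumulative distribution function. -/
noncomputable def stdNormalCDF (x : ℝ) : ℝ :=
  ∫ t in Set.Iic x, stdNormalPDF t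

/-- Soft-thresholding function `η(x, λ) = sign(x) · max(|x| − λ, 0)`. -/
noncomputable def softThreshold (x lam : ℝ) : ℝ :=
  Real.sign x * max (|x| - lam) 0

open Set Real Topology

lemma pdf_eq : stdNormalPDF = fun x =>
    (Real.sqrt (2 * Real.pi))⁻¹ * Real.exp (-(1/2) * x ^ 2) := by
  funext x; unfold stdNormalPDF; ring_nf

lemma pdf_nonneg (x : ℝ) : 0 ≤ stdNormalPDF x := by
  unfold stdNormalPDF; positivity

lemma pdf_even (x : ℝ) : stdNormalPDF (-x) = stdNormalPDF x := by
  unfold stdNormalPDF; rw [neg_pow]; norm_num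

lemma pdf_cont : Continuous stdNormalPDF := by
  unfold stdNormalPDF; fun_prop

lemma int_pdf : Integrable stdNormalPDF := by
  rw [pdf_eq]
  exact (integrable_exp_neg_mul_sq (by norm_num : (0:ℝ) < 1/2)).const_mul _

lemma int_lin : Integrable (fun x => x * stdNormalPDF x) := by
  rw [pdf_eq]
  have := (integrable_mul_exp_neg_mul_sq (by norm_num : (0:ℝ) < 1/2)).const_mul
      ((Real.sqrt (2 * Real.pi))⁻¹)
  refine this.congr ?_
  filter_upwards with x
  ring

lemma int_sq : Integrable (fun x => x ^ 2 * stdNormalPDF x) := by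
  rw [pdf_eq]
  have h := (integrable_rpow_mul_exp_neg_mul_sq (by norm_num : (0:ℝ) < 1/2)
      (by norm_num : (-1:ℝ) < 2)).const_mul ((Real.sqrt (2 * Real.pi))⁻¹)
  refine h.congr ?_
  filter_upwards with x
  rw [show ((2:ℝ)) = ((2:ℕ):ℝ) by norm_num, Real.rpow_natCast]
  ring

lemma pdf_deriv (x : ℝ) : HasDerivAt stdNormalPDF (-x * stdNormalPDF x) x := by
  have h : HasDerivAt (fun y : ℝ => -(y ^ 2) / 2) (-x) x := by
    have := ((hasDerivAt_pow 2 x).neg).div_const 2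
    exact this.congr_deriv (by push_cast; ring)
  have h2 := (h.exp).const_mul ((Real.sqrt (2 * Real.pi))⁻¹)
  have he : stdNormalPDF = fun y => (Real.sqrt (2 * Real.pi))⁻¹ * Real.exp (-(y ^ 2) / 2) := rfl
  rw [he]
  exact h2.congr_deriv (by beta_reduce; ring)

lemma pdf_total : ∫ x, stdNormalPDF x = 1 := by
  rw [pdf_eq]
  rw [MeasureTheory.integral_const_mul, integral_gaussian]
  rw [show (π / (1/2)) = 2 * π by ring]
  rw [inv_mul_cancel₀]
  positivity

lemma cdf_eq (x : ℝ) :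
    stdNormalCDF x = stdNormalCDF 0 + ∫ t in (0:ℝ)..x, stdNormalPDF t := by
  unfold stdNormalCDF
  rw [← intervalIntegral.integral_Iic_sub_Iic int_pdf.integrableOn int_pdf.integrableOn]
  ring

lemma cdf_deriv (x : ℝ) : HasDerivAt stdNormalCDF (stdNormalPDF x) x := by
  have h : HasDerivAt (fun u => ∫ t in (0:ℝ)..u, stdNormalPDF t) (stdNormalPDF x) x := by
    refine intervalIntegral.integral_hasDerivAt_right
      (int_pdf.intervalIntegrable) ?_ pdf_cont.continuousAt
    exact pdf_cont.stronglyMeasurable.stronglyMeasurableAtFilter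
  have := h.const_add (stdNormalCDF 0)
  refine this.congr_of_eventuallyEq ?_
  filter_upwards with u
  exact cdf_eq u

lemma cdf_atTop : Tendsto stdNormalCDF atTop (𝓝 1) := by
  have h1 : Tendsto (fun x => ∫ t in (0:ℝ)..x, stdNormalPDF t) atTop
      (𝓝 (∫ t in Ioi (0:ℝ), stdNormalPDF t)) :=
    intervalIntegral_tendsto_integral_Ioi 0 int_pdf.integrableOn tendsto_id
  have h2 := h1.const_add (stdNormalCDF 0)
  have h3 : stdNormalCDF 0 + ∫ t in Ioi (0:ℝ), stdNormalPDF t = 1 := by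
    rw [show stdNormalCDF 0 = ∫ t in Iic (0:ℝ), stdNormalPDF t from rfl]
    rw [intervalIntegral.integral_Iic_add_Ioi int_pdf.integrableOn int_pdf.integrableOn]
    exact pdf_total
  rw [h3] at h2
  refine h2.congr ?_
  intro x
  exact (cdf_eq x).symm

lemma cdf_atBot : Tendsto stdNormalCDF atBot (𝓝 0) := by
  have h1 : Tendsto (fun x => ∫ t in x..(0:ℝ), stdNormalPDF t) atBot
      (𝓝 (∫ t in Iic (0:ℝ), stdNormalPDF t)) :=
    intervalIntegral_tendsto_integral_Iic 0 int_pdf.integrableOn tendsto_id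
  have h2 := (h1.neg).const_add (stdNormalCDF 0)
  have h3 : stdNormalCDF 0 + -(∫ t in Iic (0:ℝ), stdNormalPDF t) = 0 := by
    rw [show stdNormalCDF 0 = ∫ t in Iic (0:ℝ), stdNormalPDF t from rfl]; ring
  rw [h3] at h2
  refine h2.congr ?_
  intro x
  rw [cdf_eq x, intervalIntegral.integral_symm, neg_neg]

lemma cdf_neg (x : ℝ) : stdNormalCDF (-x) = 1 - stdNormalCDF x := by
  have h1 : stdNormalCDF (-x) = ∫ t in Ioi x, stdNormalPDF t := by
    unfold stdNormalCDF
    rw [show Ioi x = Ioi (-(-x)) by rw [neg_neg]]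
    rw [← integral_comp_neg_Iic]
    simp_rw [pdf_even]
  rw [h1, eq_sub_iff_add_eq]
  rw [show stdNormalCDF x = ∫ t in Iic x, stdNormalPDF t from rfl, add_comm]
  rw [intervalIntegral.integral_Iic_add_Ioi int_pdf.integrableOn int_pdf.integrableOn]
  exact pdf_total

lemma sq_half_atTop : Tendsto (fun x : ℝ => -(x ^ 2) / 2) atTop atBot := by
  apply Tendsto.atBot_div_const (by norm_num : (0:ℝ) < 2)
  exact tendsto_neg_atBot_iff.mpr (tendsto_pow_atTop (by norm_num : 2 ≠ 0))

lemma pdf_atTop : Tendsto stdNormalPDF atTop (𝓝 0) := by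
  have h2 := (Real.tendsto_exp_atBot.comp sq_half_atTop).const_mul
      ((Real.sqrt (2 * Real.pi))⁻¹)
  rw [mul_zero] at h2
  exact h2.congr (fun x => by simp [stdNormalPDF, Function.comp])

lemma pdf_atBot : Tendsto stdNormalPDF atBot (𝓝 0) := by
  have := pdf_atTop.comp tendsto_neg_atBot_atTop
  exact this.congr (fun x => by simp [Function.comp, pdf_even])

lemma lin_pdf_atTop : Tendsto (fun x => x * stdNormalPDF x) atTop (𝓝 0) := by
  have hg : Tendsto (fun x : ℝ => (Real.sqrt (2 * Real.pi))⁻¹ * (x * Real.exp (-x)))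
      atTop (𝓝 0) := by
    have := (tendsto_pow_mul_exp_neg_atTop_nhds_zero 1).const_mul
        ((Real.sqrt (2 * Real.pi))⁻¹)
    rw [mul_zero] at this
    exact this.congr (fun x => by ring)
  apply squeeze_zero' ?_ ?_ hg
  · filter_upwards [eventually_ge_atTop (0:ℝ)] with x hx
    exact mul_nonneg hx (pdf_nonneg x)
  · filter_upwards [eventually_ge_atTop (2:ℝ)] with x hx
    unfold stdNormalPDF
    rw [show x * ((Real.sqrt (2 * Real.pi))⁻¹ * Real.exp (-x ^ 2 / 2))
        = (Real.sqrt (2 * Real.pi))⁻¹ * (x * Real.exp (-x ^ 2 / 2)) by ring]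
    apply mul_le_mul_of_nonneg_left ?_ (by positivity)
    apply mul_le_mul_of_nonneg_left ?_ (by linarith)
    apply Real.exp_le_exp.mpr
    nlinarith

lemma lin_pdf_atBot : Tendsto (fun x => x * stdNormalPDF x) atBot (𝓝 0) := by
  have := (lin_pdf_atTop.comp tendsto_neg_atBot_atTop).neg
  rw [neg_zero] at this
  exact this.congr (fun x => by simp [Function.comp, pdf_even])

lemma antideriv (c k : ℝ) (x : ℝ) :
    HasDerivAt (fun z => (c - z) * stdNormalPDF z + k * stdNormalCDF z)
      ((x ^ 2 - c * x + k - 1) * stdNormalPDF x) x := by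
  have h1 := (((hasDerivAt_id' (x := x))).const_sub c).mul (pdf_deriv x)
  have h2 := (cdf_deriv x).const_mul k
  have h := h1.add h2
  have he : (x ^ 2 - c * x + k - 1) * stdNormalPDF x
      = (-1 * stdNormalPDF x + (c - x) * (-x * stdNormalPDF x)) + k * stdNormalPDF x := by
    ring
  rw [he]
  exact h

lemma soft_eq (x lam : ℝ) (h : 0 ≤ lam) :
    softThreshold x lam = x - max (min x lam) (-lam) := by
  unfold softThreshold
  rcases lt_trichotomy x 0 with hx | hx | hx
  · rw [Real.sign_of_neg hx, abs_of_neg hx]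
    simp only [min_def, max_def]
    split_ifs <;> linarith
  · subst hx
    simp only [Real.sign_zero, zero_mul, min_def, max_def]
    split_ifs <;> linarith
  · rw [Real.sign_of_pos hx, abs_of_pos hx]
    simp only [min_def, max_def]
    split_ifs <;> linarith

lemma abs_soft (x lam : ℝ) (h : 0 ≤ lam) : |softThreshold x lam| ≤ |x| := by
  unfold softThreshold
  rw [abs_mul]
  have h1 : |Real.sign x| ≤ 1 := by
    rcases Real.sign_apply_eq x with h' | h' | h' <;> rw [h'] <;> norm_num
  have h2 : |max (|x| - lam) 0| ≤ |x| := by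
    rw [abs_of_nonneg (le_max_right _ _)]
    exact max_le (by linarith [abs_nonneg x]) (abs_nonneg x)
  calc |Real.sign x| * |max (|x| - lam) 0| ≤ 1 * |x| :=
        mul_le_mul h1 h2 (abs_nonneg _) zero_le_one
    _ = |x| := one_mul _

lemma intpoly (c : ℝ) : Integrable (fun z => (z + c) ^ 2 * stdNormalPDF z) := by
  have he : (fun z : ℝ => (z + c) ^ 2 * stdNormalPDF z)
      = fun z => (z ^ 2 * stdNormalPDF z + 2 * c * (z * stdNormalPDF z))
        + c ^ 2 * stdNormalPDF z := funext fun z => by ring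
  rw [he]
  exact (int_sq.add ((int_lin.const_mul _))).add (int_pdf.const_mul _)

lemma intmain (μ a : ℝ) (ha : 0 < a) :
    Integrable (fun z => (softThreshold (μ + z) a - μ) ^ 2 * stdNormalPDF z) := by
  have hcont : Continuous (fun z => (softThreshold (μ + z) a - μ) ^ 2 * stdNormalPDF z) := by
    have he : (fun z => (softThreshold (μ + z) a - μ) ^ 2 * stdNormalPDF z)
        = fun z => ((μ + z - max (min (μ + z) a) (-a)) - μ) ^ 2 * stdNormalPDF z :=
      funext fun z => by rw [soft_eq _ _ ha.le]
    rw [he]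
    apply Continuous.mul ?_ pdf_cont
    fun_prop
  have hdom : Integrable (fun z => 2 * (z ^ 2 * stdNormalPDF z)
      + 8 * μ ^ 2 * stdNormalPDF z) :=
    (int_sq.const_mul 2).add (int_pdf.const_mul _)
  refine hdom.mono' hcont.aestronglyMeasurable ?_
  filter_upwards with z
  have h1 : |softThreshold (μ + z) a| ≤ |μ + z| := abs_soft _ _ ha.le
  have h2 : |softThreshold (μ + z) a - μ| ≤ |z| + 2 * |μ| := by
    have := abs_sub_abs_le_abs_sub (softThreshold (μ + z) a) μ
    have h3 : |μ + z| ≤ |μ| + |z| := abs_add_le _ _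
    have := abs_sub (softThreshold (μ + z) a) μ
    calc |softThreshold (μ + z) a - μ| ≤ |softThreshold (μ + z) a| + |μ| := abs_sub _ _
      _ ≤ (|μ| + |z|) + |μ| := by linarith
      _ = |z| + 2 * |μ| := by ring
  have h4 : (softThreshold (μ + z) a - μ) ^ 2 ≤ 2 * z ^ 2 + 8 * μ ^ 2 := by
    have h5 : (softThreshold (μ + z) a - μ) ^ 2 ≤ (|z| + 2 * |μ|) ^ 2 := by
      rw [← sq_abs (softThreshold (μ + z) a - μ)]
      exact pow_le_pow_left₀ (abs_nonneg _) h2 2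
    nlinarith [sq_abs z, sq_abs μ, sq_nonneg (|z| - 2 * |μ|), abs_nonneg z, abs_nonneg μ]
  rw [Real.norm_eq_abs, abs_of_nonneg (mul_nonneg (sq_nonneg _) (pdf_nonneg z))]
  calc (softThreshold (μ + z) a - μ) ^ 2 * stdNormalPDF z
      ≤ (2 * z ^ 2 + 8 * μ ^ 2) * stdNormalPDF z :=
        mul_le_mul_of_nonneg_right h4 (pdf_nonneg z)
    _ = 2 * (z ^ 2 * stdNormalPDF z) + 8 * μ ^ 2 * stdNormalPDF z := by ring

noncomputable def RiskAux (μ : ℝ) (a : ℝ) : ℝ :=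
  ((μ - a) * stdNormalPDF (-a - μ) + (1 + a ^ 2) * stdNormalCDF (-a - μ))
    + μ ^ 2 * (stdNormalCDF (a - μ) - stdNormalCDF (-a - μ))
    + ((1 + a ^ 2)
        - ((a + μ) * stdNormalPDF (a - μ) + (1 + a ^ 2) * stdNormalCDF (a - μ)))

lemma cdf_diff (b t : ℝ) (h : b ≤ t) :
    ∫ z in Ioc b t, stdNormalPDF z = stdNormalCDF t - stdNormalCDF b := by
  unfold stdNormalCDF
  rw [intervalIntegral.integral_Iic_sub_Iic int_pdf.integrableOn int_pdf.integrableOn,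
    intervalIntegral.integral_of_le h]

lemma risk_eq (μ a : ℝ) (ha : 0 < a) :
    ∫ z : ℝ, (softThreshold (μ + z) a - μ) ^ 2 * stdNormalPDF z = RiskAux μ a := by
  set f : ℝ → ℝ := fun z => (softThreshold (μ + z) a - μ) ^ 2 * stdNormalPDF z with hf
  set b : ℝ := -a - μ with hb
  set t : ℝ := a - μ with ht
  have hbt : b ≤ t := by rw [hb, ht]; linarith
  have hint := intmain μ a ha
  -- region identities
  have e1 : ∀ z ∈ Iic b, f z = (z + a) ^ 2 * stdNormalPDF z := by
    intro z hz
    have hz' : μ + z ≤ -a := by simp only [mem_Iic, hb] at hz ⊢; linarith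
    have hneg : μ + z < 0 := by linarith
    rw [hf]
    unfold softThreshold
    dsimp only
    rw [Real.sign_of_neg hneg, abs_of_neg hneg,
      max_eq_left (by linarith : (0:ℝ) ≤ -(μ + z) - a)]
    ring_nf
  have e2 : ∀ z ∈ Ioc b t, f z = μ ^ 2 * stdNormalPDF z := by
    intro z hz
    obtain ⟨hz1, hz2⟩ := hz
    have h1 : -a < μ + z := by rw [hb] at hz1; linarith
    have h2 : μ + z ≤ a := by rw [ht] at hz2; linarith
    have hη : softThreshold (μ + z) a = 0 := by
      unfold softThreshold
      rcases lt_trichotomy (μ + z) 0 with hx | hx | hx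
      · rw [Real.sign_of_neg hx, abs_of_neg hx, max_eq_right (by linarith)]
        ring
      · rw [hx, Real.sign_zero, zero_mul]
      · rw [Real.sign_of_pos hx, abs_of_pos hx, max_eq_right (by linarith)]
        ring
    rw [hf]; dsimp only; rw [hη]; ring
  have e3 : ∀ z ∈ Ioi t, f z = (z - a) ^ 2 * stdNormalPDF z := by
    intro z hz
    have hpos : a < μ + z := by rw [ht] at hz; simp only [mem_Ioi] at hz; linarith
    have hpos' : 0 < μ + z := by linarith
    rw [hf]
    unfold softThreshold
    dsimp only
    rw [Real.sign_of_pos hpos', abs_of_pos hpos',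
      max_eq_left (by linarith : (0:ℝ) ≤ μ + z - a)]
    ring_nf
  -- split the integral
  have hsplit1 : (∫ z, f z) = (∫ z in Iic t, f z) + ∫ z in Ioi t, f z :=
    (intervalIntegral.integral_Iic_add_Ioi hint.integrableOn hint.integrableOn).symm
  have hsplit2 : (∫ z in Iic t, f z) = (∫ z in Iic b, f z) + ∫ z in Ioc b t, f z := by
    rw [← Iic_union_Ioc_eq_Iic hbt]
    exact setIntegral_union (Iic_disjoint_Ioc le_rfl) measurableSet_Ioc
      hint.integrableOn hint.integrableOn
  -- piece 1 : Iic b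
  have p1 : (∫ z in Iic b, f z)
      = ((-2*a - b) * stdNormalPDF b + (1 + a ^ 2) * stdNormalCDF b) := by
    rw [setIntegral_congr_fun measurableSet_Iic e1]
    have hF : ∀ x ∈ Iic b, HasDerivAt
        (fun z => (-2*a - z) * stdNormalPDF z + (1 + a ^ 2) * stdNormalCDF z)
        ((x + a) ^ 2 * stdNormalPDF x) x := by
      intro x _
      have h := antideriv (-2*a) (1 + a ^ 2) x
      rw [show (x + a) ^ 2 * stdNormalPDF x
          = (x ^ 2 - (-2*a) * x + (1 + a ^ 2) - 1) * stdNormalPDF x from by ring]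
      exact h
    have hIntOn : IntegrableOn (fun z => (z + a) ^ 2 * stdNormalPDF z) (Iic b) :=
      (intpoly a).integrableOn
    have hTend : Tendsto
        (fun z => (-2*a - z) * stdNormalPDF z + (1 + a ^ 2) * stdNormalCDF z)
        atBot (𝓝 0) := by
      have h := ((pdf_atBot.const_mul (-2*a)).sub lin_pdf_atBot).add
        (cdf_atBot.const_mul (1 + a ^ 2))
      norm_num at h
      refine h.congr fun z => by ring
    have := integral_Iic_of_hasDerivAt_of_tendsto' hF hIntOn hTend
    rw [this]; ring
  -- piece 2 : Ioc b t
  have p2 : (∫ z in Ioc b t, f z) = μ ^ 2 * (stdNormalCDF t - stdNormalCDF b) := by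
    rw [setIntegral_congr_fun measurableSet_Ioc e2, MeasureTheory.integral_const_mul,
      cdf_diff b t hbt]
  -- piece 3 : Ioi t
  have p3 : (∫ z in Ioi t, f z)
      = (1 + a ^ 2) - ((2*a - t) * stdNormalPDF t + (1 + a ^ 2) * stdNormalCDF t) := by
    rw [setIntegral_congr_fun measurableSet_Ioi e3]
    have hF : ∀ x ∈ Ici t, HasDerivAt
        (fun z => (2*a - z) * stdNormalPDF z + (1 + a ^ 2) * stdNormalCDF z)
        ((x - a) ^ 2 * stdNormalPDF x) x := by
      intro x _
      have h := antideriv (2*a) (1 + a ^ 2) x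
      rw [show (x - a) ^ 2 * stdNormalPDF x
          = (x ^ 2 - (2*a) * x + (1 + a ^ 2) - 1) * stdNormalPDF x from by ring]
      exact h
    have hIntOn : IntegrableOn (fun z => (z - a) ^ 2 * stdNormalPDF z) (Ioi t) := by
      have he : (fun z : ℝ => (z - a) ^ 2 * stdNormalPDF z)
          = fun z => (z + (-a)) ^ 2 * stdNormalPDF z := funext fun z => by ring
      rw [he]; exact (intpoly (-a)).integrableOn
    have hTend : Tendsto
        (fun z => (2*a - z) * stdNormalPDF z + (1 + a ^ 2) * stdNormalCDF z)
        atTop (𝓝 (1 + a ^ 2)) := by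
      have h := ((pdf_atTop.const_mul (2*a)).sub lin_pdf_atTop).add
        (cdf_atTop.const_mul (1 + a ^ 2))
      norm_num at h
      refine h.congr fun z => by ring
    exact integral_Ioi_of_hasDerivAt_of_tendsto' hF hIntOn hTend
  rw [hsplit1, hsplit2, p1, p2, p3]
  unfold RiskAux
  rw [hb, ht]
  ring

lemma riskAux_hasDeriv (μ a : ℝ) :
    HasDerivAt (fun x => RiskAux μ x)
      (-2 * (stdNormalPDF (a + μ) + stdNormalPDF (a - μ))
        + 2 * a * (stdNormalCDF (-a - μ) + stdNormalCDF (-a + μ))) a := by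
  have hin1 : HasDerivAt (fun x : ℝ => -x - μ) (-1) a := by
    simpa using ((hasDerivAt_id' (x := a)).neg).sub_const μ
  have hin2 : HasDerivAt (fun x : ℝ => x - μ) 1 a :=
    (hasDerivAt_id' (x := a)).sub_const μ
  have hp1 : HasDerivAt (fun x : ℝ => stdNormalPDF (-x - μ))
      ((-(-a - μ) * stdNormalPDF (-a - μ)) * (-1)) a :=
    (pdf_deriv (-a - μ)).comp (h₂ := stdNormalPDF) a hin1
  have hc1 : HasDerivAt (fun x : ℝ => stdNormalCDF (-x - μ))
      (stdNormalPDF (-a - μ) * (-1)) a :=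
    (cdf_deriv (-a - μ)).comp (h₂ := stdNormalCDF) a hin1
  have hp2 : HasDerivAt (fun x : ℝ => stdNormalPDF (x - μ))
      ((-(a - μ) * stdNormalPDF (a - μ)) * 1) a :=
    (pdf_deriv (a - μ)).comp (h₂ := stdNormalPDF) a hin2
  have hc2 : HasDerivAt (fun x : ℝ => stdNormalCDF (x - μ))
      (stdNormalPDF (a - μ) * 1) a :=
    (cdf_deriv (a - μ)).comp (h₂ := stdNormalCDF) a hin2
  have hsq : HasDerivAt (fun x : ℝ => 1 + x ^ 2) (2 * a) a := by
    simpa using (hasDerivAt_pow 2 a).const_add 1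
  have t1 := ((hasDerivAt_id' (x := a)).const_sub μ).mul hp1
  have t2 := hsq.mul hc1
  have t3 := (hc2.sub hc1).const_mul (μ ^ 2)
  have t4 := ((hasDerivAt_id' (x := a)).add_const μ).mul hp2
  have t5 := hsq.mul hc2
  have whole := ((t1.add t2).add t3).add (hsq.sub (t4.add t5))
  have heq : (fun x : ℝ =>
      ((μ - x) * stdNormalPDF (-x - μ) + (1 + x ^ 2) * stdNormalCDF (-x - μ))
        + μ ^ 2 * (stdNormalCDF (x - μ) - stdNormalCDF (-x - μ))
        + ((1 + x ^ 2)
            - ((x + μ) * stdNormalPDF (x - μ) + (1 + x ^ 2) * stdNormalCDF (x - μ))))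
      = fun x => RiskAux μ x := by
    funext x; unfold RiskAux; ring
  rw [← heq]
  refine whole.congr_deriv ?_
  have hπ1 : stdNormalPDF (-a - μ) = stdNormalPDF (a + μ) := by
    rw [show -a - μ = -(a + μ) by ring, pdf_even]
  have hΦ : stdNormalCDF (a - μ) = 1 - stdNormalCDF (-a + μ) := by
    rw [show -a + μ = -(a - μ) by ring, cdf_neg]; ring
  rw [hπ1, hΦ]
  ring

theorem risk_deriv_in_alpha (μ : ℝ) (α : ℝ) (hα : 0 < α) :
    HasDerivAt
      (fun α : ℝ => ∫ z : ℝ, (softThreshold (μ + z) α - μ) ^ 2 * stdNormalPDF z)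
      (-2 * (stdNormalPDF (α + μ) + stdNormalPDF (α - μ))
        + 2 * α * (stdNormalCDF (-α - μ) + stdNormalCDF (-α + μ))) α := by
  refine (riskAux_hasDeriv μ α).congr_of_eventuallyEq ?_
  filter_upwards [isOpen_Ioi.mem_nhds (show α ∈ Ioi (0:ℝ) from hα)] with x hx
  exact risk_eq μ x hx
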